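/- Let f : ℂ → ℂ be entire (complex differentiable on all of ℂ) and map real numbers to real numbers, and let k ≥ 1 be a natural number. Then (2/π) · ∫_0^{π/2} sin(2 k x) · Im[ f( (cos x) · e^{i x} ) ] dx = (1 / (2^{k+1} · k!)) · Re[ f^{(k)}(1/2) ], where f^{(k)} denotes the k-th complex iterated derivative of f. -/

import Mathlib

open Real

lemma aux_deriv_real {g : ℂ → ℂ} (hg : Differentiable ℂ g)
    (h : ∀ x : ℝ, (g x).im = 0) (x : ℝ) : (deriv g x).im = 0 := by
  have h1 : HasDerivAt (fun t : ℝ => g t) (deriv g x) x :=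
    (hg _).hasDerivAt.comp_ofReal
  have h2 : HasDerivAt (fun t : ℝ => (g t).im) (deriv g x).im x :=
    (Complex.imCLM.hasFDerivAt.comp_hasDerivAt x h1 :)
  have h3 : (fun t : ℝ => (g t).im) = fun _ => (0 : ℝ) := funext h
  rw [h3] at h2
  simpa using h2.unique (hasDerivAt_const x 0)

lemma aux_iterated_real {f : ℂ → ℂ} (hf : Differentiable ℂ f)
    (hreal : ∀ x : ℝ, (f x).im = 0) (n : ℕ) (x : ℝ) :
    (iteratedDeriv n f x).im = 0 := by
  induction n generalizing x with
  | zero => simpa using hreal x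
  | succ n ih =>
    rw [iteratedDeriv_succ]
    exact aux_deriv_real
      (hf.contDiff.differentiable_iteratedDeriv n
        (by exact_mod_cast lt_top_iff_ne_top.2 (by simp))) ih x

lemma aux_integral_cos_mul (c : ℝ) (hc : c ≠ 0) :
    ∫ x in (0:ℝ)..(π/2), Real.cos (c * x) = Real.sin (c * (π / 2)) / c := by
  rw [intervalIntegral.integral_comp_mul_left (fun x => Real.cos x) hc]
  simp [integral_cos, div_eq_inv_mul]

lemma aux_orth (m n : ℕ) (hm : 1 ≤ m) :
    ∫ x in (0:ℝ)..(π/2), Real.sin (2*m*x) * Real.sin (2*n*x)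
      = if m = n then π/4 else 0 := by
  have key : ∀ x : ℝ, Real.sin (2*m*x) * Real.sin (2*n*x)
      = (Real.cos ((2*(m:ℝ) - 2*n)*x) - Real.cos ((2*(m:ℝ) + 2*n)*x))/2 := by
    intro x
    rw [show ((2*(m:ℝ) - 2*n)*x) = 2*m*x - 2*n*x by ring,
        show ((2*(m:ℝ) + 2*n)*x) = 2*m*x + 2*n*x by ring,
        Real.cos_sub, Real.cos_add]
    ring
  rw [intervalIntegral.integral_congr (fun x _ => key x)]
  have hint1 : IntervalIntegrable (fun x => Real.cos ((2*(m:ℝ) - 2*n)*x))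
      MeasureTheory.volume 0 (π/2) :=
    (Real.continuous_cos.comp (by continuity)).intervalIntegrable _ _
  have hint2 : IntervalIntegrable (fun x => Real.cos ((2*(m:ℝ) + 2*n)*x))
      MeasureTheory.volume 0 (π/2) :=
    (Real.continuous_cos.comp (by continuity)).intervalIntegrable _ _
  rw [intervalIntegral.integral_div, intervalIntegral.integral_sub hint1 hint2]
  by_cases h : m = n
  · subst h
    have h1 : (2*(m:ℝ) - 2*m) = 0 := by ring
    have h2 : (2*(m:ℝ) + 2*m) ≠ 0 := by positivity
    rw [if_pos rfl]
    rw [show (fun x : ℝ => Real.cos ((2*(m:ℝ) - 2*m)*x)) = fun _ => (1:ℝ) by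
          funext x; rw [h1]; simp]
    rw [aux_integral_cos_mul _ h2]
    have h3 : (2*(m:ℝ) + 2*m) * (π/2) = (2*m : ℕ) * π := by push_cast; ring
    rw [h3, Real.sin_nat_mul_pi]
    norm_num
    ring
  · rw [if_neg h]
    have hmn : (m:ℝ) ≠ (n:ℝ) := by exact_mod_cast h
    have h1 : (2*(m:ℝ) - 2*n) ≠ 0 := by
      intro hc; apply hmn; linarith
    have h2 : (2*(m:ℝ) + 2*n) ≠ 0 := by positivity
    rw [aux_integral_cos_mul _ h1, aux_integral_cos_mul _ h2]
    have h3 : (2*(m:ℝ) - 2*n) * (π/2) = (((m:ℤ) - n : ℤ) : ℝ) * π := by push_cast; ring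
    have h4 : (2*(m:ℝ) + 2*n) * (π/2) = (((m:ℤ) + n : ℤ) : ℝ) * π := by push_cast; ring
    rw [h3, h4, Real.sin_int_mul_pi ((m:ℤ) - n), Real.sin_int_mul_pi ((m:ℤ) + n)]
    simp

lemma aux_circle (t : ℝ) :
    ((1:ℂ)/2) + Complex.exp ((2*t : ℝ) * Complex.I)/2
      = (Real.cos t : ℂ) * Complex.exp (Complex.I * t) := by
  rw [Complex.ofReal_cos, Complex.cos]
  have e1 : Complex.exp ((2*t : ℝ) * Complex.I)
      = Complex.exp ((t:ℂ) * Complex.I) * Complex.exp ((t:ℂ) * Complex.I) := by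
    rw [← Complex.exp_add]; push_cast; ring_nf
  have e3 : Complex.exp (Complex.I * t) = Complex.exp ((t:ℂ) * Complex.I) := by ring_nf
  have e4 : Complex.exp (-(t:ℂ) * Complex.I) = (Complex.exp ((t:ℂ) * Complex.I))⁻¹ := by
    rw [← Complex.exp_neg]; ring_nf
  rw [e1, e3, e4]
  have hne : Complex.exp ((t:ℂ) * Complex.I) ≠ 0 := Complex.exp_ne_zero _
  field_simp
  ring

lemma aux_pow (t : ℝ) (n : ℕ) :
    (Complex.exp ((2*t : ℝ) * Complex.I)/2)^n
      = ((1/2 : ℝ)^n : ℝ) * Complex.exp ((2*n*t : ℝ) * Complex.I) := by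
  rw [div_pow, ← Complex.exp_nat_mul]
  push_cast
  ring_nf
  rw [one_div]

set_option maxHeartbeats 1000000 in
open Real in
theorem statement_12 (f : ℂ → ℂ) (hf : Differentiable ℂ f)
    (hreal : ∀ x : ℝ, (f x).im = 0) (k : ℕ) (hk : 1 ≤ k) :
    (2 / π) * ∫ x in (0 : ℝ)..(π / 2),
        Real.sin (2 * k * x) * (f ((Real.cos x : ℂ) * Complex.exp (Complex.I * x))).im =
      (1 / (2 ^ (k + 1) * (k.factorial : ℝ))) * (iteratedDeriv k f (1 / 2)).re := by
  set p := cauchyPowerSeries f (1/2) 1 with hp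
  have H : HasFPowerSeriesOnBall f p (1/2) ⊤ := hf.hasFPowerSeriesOnBall (1/2) (R := 1) zero_lt_one
  set c : ℕ → ℂ := fun n => ((n.factorial : ℂ))⁻¹ * iteratedDeriv n f (1/2) with hc
  -- c n = p.coeff n
  have hcoeff : ∀ n, c n = p.coeff n := by
    intro n
    have h1 := H.factorial_smul (1:ℂ) n
    rw [← iteratedDeriv_eq_iteratedFDeriv, FormalMultilinearSeries.apply_eq_pow_smul_coeff,
        one_pow, one_smul, nsmul_eq_mul] at h1
    have hne : ((n.factorial : ℂ)) ≠ 0 := Nat.cast_ne_zero.mpr n.factorial_ne_zero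
    rw [hc]
    beta_reduce
    rw [← h1, inv_mul_cancel_left₀ hne]
  have him : ∀ n, (c n).im = 0 := by
    intro n
    have h1 : (iteratedDeriv n f (1/2)).im = 0 := by
      rw [show (1/2 : ℂ) = ((1/2 : ℝ) : ℂ) by norm_num]
      exact aux_iterated_real hf hreal n (1/2)
    rw [hc]
    beta_reduce
    rw [show ((n.factorial:ℂ)) = (((n.factorial:ℝ)) : ℂ) by norm_cast, ← Complex.ofReal_inv]
    simp only [Complex.mul_im, Complex.ofReal_re, Complex.ofReal_im, h1]
    ring
  -- per-point HasSum
  have hsum : ∀ t : ℝ, HasSum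
      (fun n : ℕ => Real.sin (2*k*t) * ((c n).re * ((1/2:ℝ)^n * Real.sin (2*n*t))))
      (Real.sin (2*k*t) * (f ((Real.cos t : ℂ) * Complex.exp (Complex.I * t))).im) := by
    intro t
    set y : ℂ := Complex.exp ((2*t : ℝ) * Complex.I)/2 with hy
    have hball : y ∈ EMetric.ball (0:ℂ) ⊤ := EMetric.mem_ball.2 (edist_lt_top y 0)
    have hs0 := H.hasSum_iteratedFDeriv hball
    have hterm : (fun n : ℕ => ((n.factorial : ℂ))⁻¹ • iteratedFDeriv ℂ n f (1/2) (fun _ => y))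
        = fun n => c n * y^n := by
      funext n
      rw [iteratedFDeriv_apply_eq_iteratedDeriv_mul_prod]
      simp only [Finset.prod_const, Finset.card_univ, Fintype.card_fin, smul_eq_mul, hc]
      ring
    rw [hterm, aux_circle t] at hs0
    have hs1 := Complex.hasSum_im hs0
    have hterm2 : (fun n : ℕ => (c n * y^n).im)
        = fun n => (c n).re * ((1/2:ℝ)^n * Real.sin (2*n*t)) := by
      funext n
      rw [hy, aux_pow t n]
      simp only [Complex.mul_im, Complex.mul_re, Complex.ofReal_re, Complex.ofReal_im,
        Complex.exp_ofReal_mul_I_im, Complex.exp_ofReal_mul_I_re, him n]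
      ring
    rw [hterm2] at hs1
    exact hs1.mul_left _
  -- summable bound
  have hrad : p.radius = ⊤ := top_le_iff.mp H.r_le
  have hsummable : Summable (fun n : ℕ => ‖p n‖ * (1/2:ℝ)^n) := by
    have h := p.summable_norm_mul_pow (r := (1/2 : NNReal)) (by rw [hrad]; exact ENNReal.coe_lt_top)
    have h2 : ((1/2 : NNReal) : ℝ) = (1/2 : ℝ) := by norm_num
    simpa [h2] using h
  have hcn : ∀ n, |(c n).re| ≤ ‖p n‖ := by
    intro n
    calc |(c n).re| ≤ ‖c n‖ := Complex.abs_re_le_norm _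
      _ = ‖p.coeff n‖ := by rw [hcoeff n]
      _ = ‖p n‖ := (FormalMultilinearSeries.norm_apply_eq_norm_coef).symm
  -- sum-integral interchange
  have hmain : HasSum
      (fun n : ℕ => ∫ t in (0:ℝ)..(π/2),
        Real.sin (2*k*t) * ((c n).re * ((1/2:ℝ)^n * Real.sin (2*n*t))))
      (∫ t in (0:ℝ)..(π/2),
        Real.sin (2*k*t) * (f ((Real.cos t : ℂ) * Complex.exp (Complex.I * t))).im) := by
    apply intervalIntegral.hasSum_integral_of_dominated_convergence
      (bound := fun n _ => ‖p n‖ * (1/2:ℝ)^n)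
    · intro n
      apply Continuous.aestronglyMeasurable
      continuity
    · intro n
      filter_upwards with t _
      have h1 : |Real.sin (2*k*t)| ≤ 1 := Real.abs_sin_le_one _
      have h2 : |Real.sin (2*n*t)| ≤ 1 := Real.abs_sin_le_one _
      have h3 := hcn n
      rw [Real.norm_eq_abs, abs_mul, abs_mul, abs_mul, abs_pow]
      calc |Real.sin (2*k*t)| * (|(c n).re| * (|(1/2:ℝ)|^n * |Real.sin (2*n*t)|))
          ≤ 1 * (‖p n‖ * (|(1/2:ℝ)|^n * 1)) := by gcongr
        _ = ‖p n‖ * (1/2:ℝ)^n := by rw [abs_of_nonneg (by norm_num : (0:ℝ) ≤ (1/2:ℝ))]; ring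
    · filter_upwards with t _
      exact hsummable
    · exact intervalIntegrable_const
    · filter_upwards with t _
      exact hsum t
  -- compute each integral
  have hint : (fun n : ℕ => ∫ t in (0:ℝ)..(π/2),
        Real.sin (2*k*t) * ((c n).re * ((1/2:ℝ)^n * Real.sin (2*n*t))))
      = fun n => if n = k then (c k).re * (1/2:ℝ)^k * (π/4) else 0 := by
    funext n
    have hcong : ∀ t : ℝ, Real.sin (2*k*t) * ((c n).re * ((1/2:ℝ)^n * Real.sin (2*n*t)))
        = ((c n).re * (1/2:ℝ)^n) * (Real.sin (2*k*t) * Real.sin (2*n*t)) := fun t => by ring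
    rw [intervalIntegral.integral_congr (fun t _ => hcong t),
        intervalIntegral.integral_const_mul, aux_orth k n hk]
    by_cases h : k = n
    · subst h; simp
    · rw [if_neg h, if_neg (Ne.symm h), mul_zero]
  rw [hint] at hmain
  have huniq : (∫ t in (0:ℝ)..(π/2),
        Real.sin (2*k*t) * (f ((Real.cos t : ℂ) * Complex.exp (Complex.I * t))).im)
      = (c k).re * (1/2:ℝ)^k * (π/4) :=
    hmain.unique (hasSum_ite_eq k _)
  rw [huniq]
  have hck : (c k).re = ((k.factorial:ℝ))⁻¹ * (iteratedDeriv k f (1/2)).re := by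
    rw [hc]
    beta_reduce
    rw [show ((k.factorial:ℂ)) = (((k.factorial:ℝ)) : ℂ) by norm_cast, ← Complex.ofReal_inv]
    simp [Complex.mul_re]
  rw [hck]
  have hπ : π ≠ 0 := Real.pi_ne_zero
  have hfac : (k.factorial:ℝ) ≠ 0 := Nat.cast_ne_zero.mpr k.factorial_ne_zero
  field_simp
  have h2k : (1/2:ℝ)^k * 2^k = 1 := by rw [← mul_pow]; norm_num
  linear_combination (4 * (iteratedDeriv k f (1 / 2)).re) * h2k
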